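/- Let G be a group with a prefiltration G_• of degree at most s, and let g ∈ poly(Z, G_•). Then there exist unique coefficients g_i ∈ G_i for 0 ≤ i ≤ s such that g(n) = g₀ g₁^n g₂^{C(n,2)} ⋯ g_s^{C(n,s)} for all n ∈ Z. -/

import Mathlib

/-- The discrete derivative `∂_h g (n) = g(n+h) g(n)⁻¹`. -/
def discDeriv {G : Type*} [Group G] (h : ℤ) (g : ℤ → G) : ℤ → G :=
  fun n => g (n + h) * (g n)⁻¹

/-- `g : ℤ → G` is a polynomial sequence adapted to `Gf` if every iterated discrete
derivative of order `i` takes values in `Gf i`. -/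
def IsPolySeq {G : Type*} [Group G] (Gf : ℕ → Subgroup G) (g : ℤ → G) : Prop :=
  ∀ (hs : List ℤ) (n : ℤ), (hs.foldr discDeriv g) n ∈ Gf hs.length

/-- The binomial coefficient `C(n, k)` for an integer `n` (the division is exact). -/
def zchoose (n : ℤ) (k : ℕ) : ℤ :=
  (∏ i ∈ Finset.range k, (n - (i : ℤ))) / (k.factorial : ℤ)

namespace TaylorAux

open scoped commutatorElement

/-! ### Integer difference operators -/

def intDiff (h : ℤ) (E : ℤ → ℤ) : ℤ → ℤ := fun n => E (n + h) - E n

lemma intDiff_comm (a b : ℤ) (E : ℤ → ℤ) :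
    intDiff a (intDiff b E) = intDiff b (intDiff a E) := by
  funext n
  simp only [intDiff]
  rw [add_right_comm n b a]
  ring

lemma intDiff_zero_fun (a : ℤ) : intDiff a (fun _ => (0:ℤ)) = fun _ => 0 := by
  funext n; simp [intDiff]

lemma intDiff_of_periodic {E : ℤ → ℤ} (hE : intDiff 1 E = fun _ => 0) (h : ℤ) :
    intDiff h E = fun _ => 0 := by
  have h1 : ∀ n : ℤ, E (n + 1) = E n := by
    intro n
    have := congrFun hE n
    simp [intDiff] at this
    omega
  have key : ∀ (h : ℤ) (n : ℤ), E (n + h) = E n := by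
    intro h
    induction h using Int.induction_on with
    | zero => simp
    | succ k ih =>
        intro n
        have h2 := h1 (n + k)
        rw [show n + ((k:ℤ)+1) = n + (k:ℤ) + 1 by ring, h2]; exact ih n
    | pred k ih =>
        intro n
        have := h1 (n + (-(k:ℤ) - 1))
        rw [show n + (-(k:ℤ)-1) + 1 = n + -(k:ℤ) by ring] at this
        rw [← this]; exact ih n
  funext n; simp [intDiff, key h n]

lemma intDiff_iterate_comm (j : ℕ) (h : ℤ) (E : ℤ → ℤ) :
    (intDiff 1)^[j] (intDiff h E) = intDiff h ((intDiff 1)^[j] E) := by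
  induction j generalizing E with
  | zero => rfl
  | succ j ih =>
      rw [Function.iterate_succ_apply, Function.iterate_succ_apply, intDiff_comm, ih]

lemma intDiff_step {j : ℕ} {E : ℤ → ℤ} (hE : (intDiff 1)^[j+1] E = fun _ => 0) (h : ℤ) :
    (intDiff 1)^[j] (intDiff h E) = fun _ => 0 := by
  rw [intDiff_iterate_comm]
  apply intDiff_of_periodic
  have := Function.iterate_succ_apply' (intDiff 1) j E
  rw [← this]
  exact hE

lemma foldr_intDiff_vanish_aux :
    ∀ (t : List ℤ) (j : ℕ) (E : ℤ → ℤ), (intDiff 1)^[j + t.length + 1] E = (fun _ => 0) →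
      (intDiff 1)^[j + 1] (t.foldr intDiff E) = fun _ => 0 := by
  intro t
  induction t with
  | nil => intro j E hE; simpa using hE
  | cons a t ih =>
      intro j E hE
      have h1 : (intDiff 1)^[(j+1) + 1] (t.foldr intDiff E) = fun _ => 0 := by
        apply ih (j+1) E
        rw [show j + 1 + t.length + 1 = j + (a :: t).length + 1 by simp; omega]
        exact hE
      exact intDiff_step h1 a

lemma foldr_intDiff_eq_zero {k : ℕ} {E : ℤ → ℤ} (hE : (intDiff 1)^[k+1] E = fun _ => 0) :
    ∀ (t : List ℤ), k < t.length → t.foldr intDiff E = fun _ => 0 := by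
  intro t
  induction t with
  | nil => intro h; simp at h
  | cons a t ih =>
      intro hlen
      by_cases hk : k < t.length
      · have := ih hk
        show intDiff a (t.foldr intDiff E) = _
        rw [this]; exact intDiff_zero_fun a
      · have hkl : t.length = k := by simp at hlen; omega
        have h1 : (intDiff 1)^[0 + 1] (t.foldr intDiff E) = fun _ => 0 := by
          apply foldr_intDiff_vanish_aux t 0 E
          rw [show 0 + t.length + 1 = k + 1 by omega]
          exact hE
        show intDiff a (t.foldr intDiff E) = _
        exact intDiff_of_periodic (by simpa using h1) a


lemma cast_ascFactorial (m : ℕ) : ∀ k : ℕ,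
    ((m.ascFactorial k : ℕ) : ℤ) = ∏ i ∈ Finset.range k, ((m:ℤ) + i) := by
  intro k
  induction k with
  | zero => simp [Nat.ascFactorial]
  | succ k ih => rw [Finset.prod_range_succ, ← ih, Nat.ascFactorial]; push_cast; ring

lemma factorial_dvd_prod (k : ℕ) (n : ℤ) :
    (k.factorial : ℤ) ∣ ∏ i ∈ Finset.range k, (n - (i : ℤ)) := by
  rcases le_or_gt 0 n with hn | hn
  · lift n to ℕ using hn
    rcases le_or_gt k n with hk | hk
    · have : ∏ i ∈ Finset.range k, ((n:ℤ) - (i : ℤ)) = ((n.descFactorial k : ℕ) : ℤ) := by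
        rw [Nat.descFactorial_eq_prod_range]
        push_cast
        apply Finset.prod_congr rfl
        intro i hi
        simp only [Finset.mem_range] at hi
        have : i ≤ n := le_trans (le_of_lt hi) hk
        push_cast [Nat.cast_sub this]
        ring
      rw [this]
      exact_mod_cast Nat.factorial_dvd_descFactorial n k
    · have : ∏ i ∈ Finset.range k, ((n:ℤ) - (i : ℤ)) = 0 := by
        apply Finset.prod_eq_zero (Finset.mem_range.mpr hk)
        simp
      rw [this]; exact dvd_zero _
  · -- n < 0
    set m : ℕ := (-n).toNat with hm
    have hmn : (m : ℤ) = -n := Int.toNat_of_nonneg (by omega)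
    have : ∏ i ∈ Finset.range k, (n - (i : ℤ)) = (-1)^k * ∏ i ∈ Finset.range k, ((m:ℤ) + i) := by
      have e : ∏ i ∈ Finset.range k, (n - (i : ℤ))
          = ∏ i ∈ Finset.range k, (-1) * ((m:ℤ) + i) := by
        apply Finset.prod_congr rfl
        intro i _
        rw [hmn]; ring
      rw [e, Finset.prod_mul_distrib, Finset.prod_const, Finset.card_range]
    rw [this, ← cast_ascFactorial]
    exact Dvd.dvd.mul_left (by exact_mod_cast Nat.factorial_dvd_ascFactorial m k) _

lemma prod_succ_rec (k : ℕ) (n : ℤ) :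
    ∏ i ∈ Finset.range (k+1), ((n+1) - (i : ℤ))
      = ∏ i ∈ Finset.range (k+1), (n - (i : ℤ)) + (k+1) * ∏ i ∈ Finset.range k, (n - (i : ℤ)) := by
  have h1 : ∏ i ∈ Finset.range (k+1), ((n+1) - (i : ℤ))
      = (∏ i ∈ Finset.range k, (n - (i:ℤ))) * (n+1) := by
    rw [Finset.prod_range_succ' (fun i => (n+1) - (i:ℤ)) k]
    congr 1
    · apply Finset.prod_congr rfl; intro i _; push_cast; ring
    · simp
  have h2 : ∏ i ∈ Finset.range (k+1), (n - (i : ℤ))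
      = (∏ i ∈ Finset.range k, (n - (i:ℤ))) * (n - k) := Finset.prod_range_succ _ k
  rw [h1, h2]; ring

lemma zchoose_pascal (n : ℤ) (k : ℕ) :
    zchoose (n+1) (k+1) = zchoose n (k+1) + zchoose n k := by
  obtain ⟨u, hu⟩ := factorial_dvd_prod k n
  obtain ⟨v, hv⟩ := factorial_dvd_prod (k+1) n
  have hfk : (k.factorial : ℤ) ≠ 0 := by exact_mod_cast Nat.factorial_ne_zero k
  have hfk1 : ((k+1).factorial : ℤ) ≠ 0 := by exact_mod_cast Nat.factorial_ne_zero (k+1)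
  have hfact : ((k+1).factorial : ℤ) = (k+1) * k.factorial := by
    rw [Nat.factorial_succ]; push_cast; ring
  have hprod : ∏ i ∈ Finset.range (k+1), ((n+1) - (i : ℤ))
      = ((k+1).factorial : ℤ) * (v + u) := by
    rw [prod_succ_rec, hu, hv, hfact]; ring
  unfold zchoose
  rw [hprod, hu, hv, Int.mul_ediv_cancel_left _ hfk1, Int.mul_ediv_cancel_left _ hfk,
    Int.mul_ediv_cancel_left _ hfk1]

lemma zchoose_zero (n : ℤ) : zchoose n 0 = 1 := by simp [zchoose]

lemma zchoose_self (k : ℕ) : zchoose (k : ℤ) k = 1 := by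
  unfold zchoose
  have hfac : ∀ k : ℕ, ∏ j ∈ Finset.range k, ((j:ℤ)+1) = (k.factorial : ℤ) := by
    intro k
    induction k with
    | zero => simp
    | succ k ih => rw [Finset.prod_range_succ, ih, Nat.factorial_succ]; push_cast; ring
  have : ∏ i ∈ Finset.range k, ((k:ℤ) - (i : ℤ)) = (k.factorial : ℤ) := by
    rw [← Finset.prod_range_reflect (fun j => (k:ℤ) - (j:ℤ)) k, ← hfac k]
    apply Finset.prod_congr rfl
    intro j hj
    simp only [Finset.mem_range] at hj
    have e2 : k - 1 - j ≤ k := by omega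
    push_cast [Nat.cast_sub e2]
    omega
  rw [this, Int.ediv_self (by exact_mod_cast Nat.factorial_ne_zero k)]

lemma zchoose_eq_zero {n : ℤ} {k : ℕ} (h0 : 0 ≤ n) (hk : n < k) : zchoose n k = 0 := by
  unfold zchoose
  have : ∏ i ∈ Finset.range k, (n - (i : ℤ)) = 0 := by
    apply Finset.prod_eq_zero (i := n.toNat)
    · simp only [Finset.mem_range]; omega
    · rw [Int.toNat_of_nonneg h0]; ring
  rw [this]; simp


variable {G : Type*} [Group G] (Gf : ℕ → Subgroup G)

/-- Bounded-order polynomiality. -/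
def PolyUpTo (m N : ℕ) (g : ℤ → G) : Prop :=
  ∀ hs : List ℤ, hs.length ≤ N → ∀ n, (hs.foldr discDeriv g) n ∈ Gf (m + hs.length)

variable {Gf}

lemma GfAnt (hmono : ∀ i, Gf (i + 1) ≤ Gf i) : Antitone Gf :=
  antitone_nat_of_succ_le hmono

lemma polyUpTo_apply {m N g} (h : PolyUpTo Gf m N g) : ∀ n, g n ∈ Gf m := by
  intro n
  simpa using h [] (Nat.zero_le _) n

lemma polyUpTo_mono_N {m N N' g} (hN : N' ≤ N) (h : PolyUpTo Gf m N g) :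
    PolyUpTo Gf m N' g := fun hs hl n => h hs (le_trans hl hN) n

lemma polyUpTo_mono_m (hmono : ∀ i, Gf (i + 1) ≤ Gf i) {m m' N g} (hm : m' ≤ m)
    (h : PolyUpTo Gf m N g) : PolyUpTo Gf m' N g := fun hs hl n =>
  GfAnt hmono (Nat.add_le_add_right hm _) (h hs hl n)

lemma polyUpTo_cast {m m' N g} (hm : m = m') (h : PolyUpTo Gf m N g) :
    PolyUpTo Gf m' N g := hm ▸ h

lemma polyUpTo_congr {m N} {g g' : ℤ → G} (hgg : ∀ n, g n = g' n) (h : PolyUpTo Gf m N g) :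
    PolyUpTo Gf m N g' := by
  have : g = g' := funext hgg
  exact this ▸ h

lemma polyUpTo_zero {m g} (h : ∀ n, g n ∈ Gf m) : PolyUpTo Gf m 0 g := by
  intro hs hl n
  have : hs = [] := List.length_eq_zero_iff.mp (Nat.le_zero.mp hl)
  subst this
  simpa using h n

lemma polyUpTo_deriv {m N g} (h : PolyUpTo Gf m (N+1) g) (a : ℤ) :
    PolyUpTo Gf (m+1) N (discDeriv a g) := by
  intro hs hl n
  have h1 : hs.foldr discDeriv (discDeriv a g) = (hs ++ [a]).foldr discDeriv g := by
    rw [List.foldr_append]; rfl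
  rw [h1]
  have h2 := h (hs ++ [a]) (by simp; omega) n
  have h3 : m + (hs ++ [a]).length = m + 1 + hs.length := by simp; omega
  rw [h3] at h2
  exact h2

lemma polyUpTo_build {m N} {g : ℤ → G} (h0 : ∀ n, g n ∈ Gf m)
    (h1 : ∀ a, PolyUpTo Gf (m+1) N (discDeriv a g)) : PolyUpTo Gf m (N+1) g := by
  intro hs hl n
  induction hs using List.reverseRecOn with
  | nil => simpa using h0 n
  | append_singleton l a _ =>
      rw [List.foldr_append]
      have h2 := h1 a l (by simp at hl; omega) n
      have h3 : m + 1 + l.length = m + (l ++ [a]).length := by simp; omega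
      rw [h3] at h2
      exact h2

/-- The Lazard–Leibman closure properties, by induction on the order bound. -/
lemma polyUpTo_closure (hmono : ∀ i, Gf (i + 1) ≤ Gf i)
    (hcomm : ∀ i j, ⁅Gf i, Gf j⁆ ≤ Gf (i + j)) : ∀ N : ℕ,
    (∀ m m' (g h : ℤ → G), PolyUpTo Gf m N g → PolyUpTo Gf m' N h →
        PolyUpTo Gf (min m m') N (fun n => g n * h n)) ∧
    (∀ m m' (g h : ℤ → G), PolyUpTo Gf m N g → PolyUpTo Gf m' N h →
        PolyUpTo Gf (m + m') N (fun n => ⁅g n, h n⁆)) ∧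
    (∀ m (g : ℤ → G), PolyUpTo Gf m N g → PolyUpTo Gf m N (fun n => (g n)⁻¹)) := by
  intro N
  induction N with
  | zero =>
      refine ⟨?_, ?_, ?_⟩
      · intro m m' g h hg hh
        apply polyUpTo_zero
        intro n
        exact mul_mem (GfAnt hmono (min_le_left m m') (polyUpTo_apply hg n))
          (GfAnt hmono (min_le_right m m') (polyUpTo_apply hh n))
      · intro m m' g h hg hh
        apply polyUpTo_zero
        intro n
        exact hcomm m m'
          (Subgroup.commutator_mem_commutator (polyUpTo_apply hg n) (polyUpTo_apply hh n))
      · intro m g hg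
        apply polyUpTo_zero
        intro n
        exact inv_mem (polyUpTo_apply hg n)
  | succ N ih =>
      obtain ⟨ihA, ihB, ihC⟩ := ih
      refine ⟨?_, ?_, ?_⟩
      · -- product
        intro m m' g h hg hh
        apply polyUpTo_build
        · intro n
          exact mul_mem (GfAnt hmono (min_le_left m m') (polyUpTo_apply hg n))
            (GfAnt hmono (min_le_right m m') (polyUpTo_apply hh n))
        · intro a
          have hgN := polyUpTo_mono_N (Nat.le_succ N) hg
          have hhN := polyUpTo_mono_N (Nat.le_succ N) hh
          have hγ := polyUpTo_deriv hg a
          have hη := polyUpTo_deriv hh a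
          set γ := discDeriv a g with hγdef
          set η := discDeriv a h with hηdef
          have hK : PolyUpTo Gf (m + (m'+1)) N (fun n => ⁅g n, η n⁆) := ihB _ _ _ _ hgN hη
          have hKη : PolyUpTo Gf (m'+1) N (fun n => ⁅g n, η n⁆ * η n) := by
            have := ihA _ _ _ _ hK hη
            exact polyUpTo_cast (by omega) this
          have hfin : PolyUpTo Gf (min m m' + 1) N (fun n => γ n * (⁅g n, η n⁆ * η n)) := by
            have := ihA _ _ _ _ hγ hKη
            exact polyUpTo_cast (by omega) this
          apply polyUpTo_congr (g := fun n => γ n * (⁅g n, η n⁆ * η n)) _ hfin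
          intro n
          simp only [hγdef, hηdef, discDeriv, commutatorElement_def]
          group
      · -- commutator
        intro m m' g h hg hh
        apply polyUpTo_build
        · intro n
          exact hcomm m m'
            (Subgroup.commutator_mem_commutator (polyUpTo_apply hg n) (polyUpTo_apply hh n))
        · intro a
          have hgN := polyUpTo_mono_N (Nat.le_succ N) hg
          have hhN := polyUpTo_mono_N (Nat.le_succ N) hh
          have hγ := polyUpTo_deriv hg a
          have hη := polyUpTo_deriv hh a
          set γ := discDeriv a g with hγdef
          set η := discDeriv a h with hηdef
          have hw : PolyUpTo Gf (m + m') N (fun n => ⁅g n, h n⁆) := ihB _ _ _ _ hgN hhN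
          have hηh : PolyUpTo Gf m' N (fun n => η n * h n) := by
            have := ihA _ _ _ _ hη hhN
            exact polyUpTo_cast (by omega) this
          have hZ : PolyUpTo Gf (m + m') N (fun n => ⁅g n, η n * h n⁆) := ihB _ _ _ _ hgN hηh
          have hV : PolyUpTo Gf (m + m' + 1) N (fun n => ⁅γ n, η n * h n⁆) := by
            have := ihB _ _ _ _ hγ hηh
            exact polyUpTo_cast (by omega) this
          have hF1 : PolyUpTo Gf (m + m' + 1) N (fun n => ⁅γ n, ⁅g n, η n * h n⁆⁆) := by
            have := ihB _ _ _ _ hγ hZ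
            exact polyUpTo_mono_m hmono (by omega) this
          have hF2 : PolyUpTo Gf (m + m' + 1) N (fun n => ⁅g n, η n⁆) := by
            have := ihB _ _ _ _ hgN hη
            exact polyUpTo_mono_m hmono (by omega) this
          have hF3 : PolyUpTo Gf (m + m' + 1) N (fun n => ⁅η n, ⁅g n, h n⁆⁆) := by
            have := ihB _ _ _ _ hη hw
            exact polyUpTo_mono_m hmono (by omega) this
          have hF4 : PolyUpTo Gf (m + m' + 1) N (fun n => ⁅⁅g n, h n⁆, ⁅γ n, η n * h n⁆⁆) := by
            have := ihB _ _ _ _ hw hV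
            exact polyUpTo_mono_m hmono (by omega) this
          have hprod : PolyUpTo Gf (m + m' + 1) N
              (fun n => ⁅γ n, ⁅g n, η n * h n⁆⁆ * (⁅g n, η n⁆ * (⁅η n, ⁅g n, h n⁆⁆ *
                (⁅⁅g n, h n⁆, ⁅γ n, η n * h n⁆⁆ * ⁅γ n, η n * h n⁆)))) := by
            have p1 := ihA _ _ _ _ hF4 hV
            have p2 := ihA _ _ _ _ hF3 (polyUpTo_cast (min_self _) p1)
            have p3 := ihA _ _ _ _ hF2 (polyUpTo_cast (min_self _) p2)
            have p4 := ihA _ _ _ _ hF1 (polyUpTo_cast (min_self _) p3)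
            exact polyUpTo_cast (min_self _) p4
          apply polyUpTo_congr _ hprod
          intro n
          simp only [hγdef, hηdef, discDeriv, commutatorElement_def]
          group
      · -- inverse
        intro m g hg
        apply polyUpTo_build
        · intro n
          exact inv_mem (polyUpTo_apply hg n)
        · intro a
          have hgN := polyUpTo_mono_N (Nat.le_succ N) hg
          have hγ := polyUpTo_deriv hg a
          set γ := discDeriv a g with hγdef
          have hginv : PolyUpTo Gf m N (fun n => (g n)⁻¹) := ihC _ _ hgN
          have hγinv : PolyUpTo Gf (m+1) N (fun n => (γ n)⁻¹) := ihC _ _ hγ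
          have hF : PolyUpTo Gf (m+1) N (fun n => ⁅γ n, (g n)⁻¹⁆) := by
            have := ihB _ _ _ _ hγ hginv
            exact polyUpTo_mono_m hmono (by omega) this
          have hprod : PolyUpTo Gf (m+1) N (fun n => (γ n)⁻¹ * ⁅γ n, (g n)⁻¹⁆) := by
            have := ihA _ _ _ _ hγinv hF
            exact polyUpTo_cast (min_self _) this
          apply polyUpTo_congr _ hprod
          intro n
          simp only [hγdef, discDeriv, commutatorElement_def]
          group

lemma isPolySeq_iff_polyUpTo {g : ℤ → G} :
    IsPolySeq Gf g ↔ ∀ N, PolyUpTo Gf 0 N g := by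
  constructor
  · intro H N hs _ n
    simpa using H hs n
  · intro H hs n
    simpa using H hs.length hs le_rfl n

lemma isPolySeq_mul (hmono : ∀ i, Gf (i + 1) ≤ Gf i)
    (hcomm : ∀ i j, ⁅Gf i, Gf j⁆ ≤ Gf (i + j)) {g h : ℤ → G}
    (hg : IsPolySeq Gf g) (hh : IsPolySeq Gf h) : IsPolySeq Gf (fun n => g n * h n) := by
  rw [isPolySeq_iff_polyUpTo] at *
  intro N
  have := (polyUpTo_closure hmono hcomm N).1 0 0 g h (hg N) (hh N)
  simpa using this


/-! ### power sequences -/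

lemma zchoose_diff_vanish (k : ℕ) :
    (intDiff 1)^[k+1] (fun n => zchoose n k) = fun _ => 0 := by
  induction k with
  | zero =>
      funext n
      simp [intDiff, zchoose_zero]
  | succ k ih =>
      have h1 : intDiff 1 (fun n => zchoose n (k+1)) = fun n => zchoose n k := by
        funext n
        simp only [intDiff]
        rw [zchoose_pascal]
        ring
      rw [Function.iterate_succ_apply, h1]
      exact ih

lemma foldr_discDeriv_zpow (c : G) : ∀ (hs : List ℤ) (E : ℤ → ℤ),
    hs.foldr discDeriv (fun n => c ^ E n) = fun n => c ^ (hs.foldr intDiff E n) := by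
  intro hs
  induction hs with
  | nil => intro E; rfl
  | cons a t ih =>
      intro E
      show discDeriv a (t.foldr discDeriv (fun n => c ^ E n)) = _
      rw [ih E]
      funext n
      simp only [discDeriv, intDiff]
      rw [← zpow_sub]
      rfl

lemma isPolySeq_zpow (hmono : ∀ i, Gf (i + 1) ≤ Gf i) {k : ℕ} {c : G} (hc : c ∈ Gf k)
    {E : ℤ → ℤ} (hE : (intDiff 1)^[k+1] E = fun _ => 0) :
    IsPolySeq Gf (fun n => c ^ E n) := by
  intro hs n
  rw [foldr_discDeriv_zpow]
  rcases le_or_gt hs.length k with hlen | hlen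
  · exact zpow_mem (GfAnt hmono hlen hc) _
  · rw [foldr_intDiff_eq_zero hE hs hlen]
    simpa using one_mem _

/-! ### values of vanishing polynomial sequences -/

lemma foldr_replicate_one (r : ℤ → G) : ∀ (k : ℕ), (∀ j : ℕ, j < k → r j = 1) →
    ((List.replicate k (1:ℤ)).foldr discDeriv r) 0 = r k := by
  intro k
  induction k generalizing r with
  | zero => simp
  | succ k ih =>
      intro hr
      rw [List.replicate_succ', List.foldr_append]
      have h1 : (List.foldr discDeriv r [(1:ℤ)]) = discDeriv 1 r := rfl
      rw [h1]
      have h2 : ∀ j : ℕ, j < k → discDeriv 1 r j = 1 := by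
        intro j hj
        have e1 : r (j+1) = 1 := by
          have := hr (j+1) (by omega)
          push_cast at this
          exact this
        have e2 : r j = 1 := hr j (by omega)
        simp [discDeriv, e1, e2]
      rw [ih _ h2]
      have e3 : r k = 1 := hr k (by omega)
      show r ((k:ℤ) + 1) * (r (k:ℤ))⁻¹ = r ((k+1 : ℕ) : ℤ)
      rw [e3]
      push_cast
      simp

lemma value_mem (hr : IsPolySeq Gf r) (k : ℕ) (hvan : ∀ j : ℕ, j < k → r j = 1) :
    r k ∈ Gf k := by
  have h := hr (List.replicate k 1) 0
  rw [foldr_replicate_one r k hvan] at h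
  simpa using h

lemma const_of_discDeriv_one {F : ℤ → G} (h : ∀ n, F (n + 1) = F n) : ∀ n, F n = F 0 := by
  intro n
  induction n using Int.induction_on with
  | zero => rfl
  | succ k ih => rw [h k]; exact ih
  | pred k ih => rw [← ih, ← h (-(k:ℤ) - 1)]; congr 1; ring

lemma trivial_poly (s : ℕ) (hbotS : Gf (s+1) = ⊥) {r : ℤ → G} (hr : IsPolySeq Gf r)
    (hvan : ∀ j : ℕ, j < s + 1 → r j = 1) : ∀ n, r n = 1 := by
  have T : ∀ d : ℕ, d ≤ s + 1 → ∀ n, ((List.replicate (s + 1 - d) (1:ℤ)).foldr discDeriv r) n = 1 := by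
    intro d
    induction d with
    | zero =>
        intro _ n
        have h := hr (List.replicate (s+1) 1) n
        simp only [List.length_replicate] at h
        rw [hbotS] at h
        simpa using h
    | succ d ih =>
        intro hd n
        have hd' : d ≤ s + 1 := by omega
        have e : s + 1 - d = (s + 1 - (d+1)) + 1 := by omega
        have ihe := ih hd'
        rw [e] at ihe
        set j := s + 1 - (d + 1) with hj
        -- ihe : ∀ n, (replicate (j+1) 1).foldr discDeriv r n = 1
        set F := (List.replicate j (1:ℤ)).foldr discDeriv r with hF
        have hstep : ∀ n, F (n + 1) = F n := by
          intro n
          have := ihe n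
          rw [List.replicate_succ] at this
          have h2 : (List.replicate j (1:ℤ)).foldr discDeriv r = F := rfl
          simp only [List.foldr_cons, discDeriv] at this
          rw [mul_inv_eq_one] at this
          exact this
        have hconst := const_of_discDeriv_one hstep
        have hF0 : F 0 = 1 := by
          rw [hF, foldr_replicate_one r j (fun i hi => hvan i (by omega))]
          exact hvan j (by omega)
        rw [hconst n, hF0]
  have := T (s+1) le_rfl
  simpa using this


end TaylorAux

open TaylorAux in
/-- Taylor expansion of a polynomial sequence with respect to a
prefiltration of degree at most `s`, with unique coefficients `gᵢ ∈ Gᵢ`. -/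
theorem taylor_expansion_prefiltration {G : Type*} [Group G] (s : ℕ) (Gf : ℕ → Subgroup G)
    (hmono : ∀ i, Gf (i + 1) ≤ Gf i)
    (hbot : ∀ i, s < i → Gf i = ⊥)
    (hcomm : ∀ i j, ⁅Gf i, Gf j⁆ ≤ Gf (i + j))
    (g : ℤ → G) (hg : IsPolySeq Gf g) :
    ∃! c : Fin (s + 1) → G, (∀ i, c i ∈ Gf i.val) ∧
      ∀ n : ℤ, g n = ((List.finRange (s + 1)).map (fun i => c i ^ zchoose n i.val)).prod := by
  classical
  -- remainder sequences
  let r : ℕ → ℤ → G := fun k =>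
    Nat.rec g (fun k rk => fun n => ((rk (k:ℤ))⁻¹) ^ zchoose n k * rk n) k
  have hr0 : r 0 = g := rfl
  have hrsucc : ∀ k, r (k+1) = fun n => ((r k (k:ℤ))⁻¹) ^ zchoose n k * r k n := fun _ => rfl
  have inv : ∀ k, IsPolySeq Gf (r k) ∧ (∀ j : ℕ, j < k → r k j = 1) := by
    intro k
    induction k with
    | zero => exact ⟨hg, fun j hj => absurd hj (Nat.not_lt_zero j)⟩
    | succ k ih =>
        obtain ⟨hpoly, hvan⟩ := ih
        have hck : r k k ∈ Gf k := value_mem hpoly k hvan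
        have hq : IsPolySeq Gf (fun n => ((r k (k:ℤ))⁻¹) ^ zchoose n k) :=
          isPolySeq_zpow hmono (inv_mem hck) (zchoose_diff_vanish k)
        refine ⟨?_, ?_⟩
        · rw [hrsucc k]
          exact isPolySeq_mul hmono hcomm hq hpoly
        · intro j hj
          rcases Nat.lt_succ_iff_lt_or_eq.mp hj with hj' | hj'
          · rw [hrsucc k]
            have h0 : zchoose (j:ℤ) k = 0 :=
              zchoose_eq_zero (by positivity) (by exact_mod_cast hj')
            simp [h0, hvan j hj']
          · rw [hj', hrsucc k]
            simp [zchoose_self k]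
  -- Taylor product formula with remainder
  have prodf : ∀ k, ∀ n : ℤ,
      g n = ((List.range k).map (fun i => (r i (i:ℤ)) ^ zchoose n i)).prod * r k n := by
    intro k
    induction k with
    | zero => intro n; simp [hr0]
    | succ k ih =>
        intro n
        rw [List.range_succ, List.map_append, List.prod_append]
        have hrk : r k n = (r k (k:ℤ)) ^ zchoose n k * r (k+1) n := by
          rw [hrsucc k]
          show r k n = r k (k:ℤ) ^ zchoose n k * ((r k (k:ℤ))⁻¹ ^ zchoose n k * r k n)
          rw [inv_zpow, mul_inv_cancel_left]
        rw [ih n, hrk]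
        simp [mul_assoc]
  have hbotS : Gf (s+1) = ⊥ := hbot (s+1) (by omega)
  have htriv : ∀ n : ℤ, r (s+1) n = 1 :=
    trivial_poly s hbotS (inv (s+1)).1 (fun j hj => (inv (s+1)).2 j hj)
  have hrange : ∀ n : ℤ,
      g n = ((List.range (s+1)).map (fun i => (r i (i:ℤ)) ^ zchoose n i)).prod := by
    intro n; rw [prodf (s+1) n, htriv n, mul_one]
  -- conversion between Fin-indexed and ℕ-indexed products
  have hconv : ∀ (d : Fin (s+1) → G) (n : ℤ),
      ((List.finRange (s+1)).map (fun i => d i ^ zchoose n i.val)).prod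
        = ((List.range (s+1)).map
            (fun j => (if h : j < s+1 then d ⟨j, h⟩ else 1) ^ zchoose n j)).prod := by
    intro d n
    rw [← List.map_coe_finRange_eq_range, List.map_map]
    congr 1
    apply List.map_congr_left
    intro i _
    simp [i.isLt, not_lt.mpr (Fin.is_le i)]
  -- the coefficients
  set C : Fin (s+1) → G := fun i => r i.val (i.val : ℤ) with hCdef
  have hmem : ∀ i : Fin (s+1), C i ∈ Gf i.val :=
    fun i => value_mem (inv i.val).1 i.val (inv i.val).2
  have hCeq : ∀ n : ℤ,
      g n = ((List.finRange (s+1)).map (fun i => C i ^ zchoose n i.val)).prod := by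
    intro n
    rw [hconv C n, hrange n]
    congr 1
    apply List.map_congr_left
    intro j hj
    simp only [List.mem_range] at hj
    rw [dif_pos hj]
  -- key evaluation lemma
  have keyP : ∀ (dd : ℕ → G) (k : ℕ), k < s+1 →
      ((List.range (s+1)).map (fun j => dd j ^ zchoose (k:ℤ) j)).prod
        = ((List.range k).map (fun j => dd j ^ zchoose (k:ℤ) j)).prod * dd k := by
    intro dd k hk
    have tail : ∀ t : ℕ,
        ((List.range ((k+1)+t)).map (fun j => dd j ^ zchoose (k:ℤ) j)).prod
          = ((List.range (k+1)).map (fun j => dd j ^ zchoose (k:ℤ) j)).prod := by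
      intro t
      induction t with
      | zero => rfl
      | succ t iht =>
          have e : (k+1)+(t+1) = ((k+1)+t)+1 := by omega
          rw [e, List.range_succ, List.map_append, List.prod_append]
          have h0 : zchoose (k:ℤ) ((k+1)+t) = 0 :=
            zchoose_eq_zero (by positivity) (by exact_mod_cast (by omega : k < (k+1)+t))
          simp [h0, iht]
    have e2 : s + 1 = (k+1) + (s - k) := by omega
    rw [e2, tail (s-k), List.range_succ, List.map_append, List.prod_append]
    simp [zchoose_self k]
  refine ⟨C, ⟨hmem, hCeq⟩, ?_⟩
  -- uniqueness
  intro y hy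
  obtain ⟨hymem, hyEq⟩ := hy
  have hkey : ∀ n : ℤ,
      ((List.range (s+1)).map
          (fun j => (if h : j < s+1 then y ⟨j, h⟩ else 1) ^ zchoose n j)).prod
        = ((List.range (s+1)).map
          (fun j => (if h : j < s+1 then C ⟨j, h⟩ else 1) ^ zchoose n j)).prod := by
    intro n
    rw [← hconv y n, ← hconv C n, ← hyEq n, ← hCeq n]
  have huniq : ∀ k, ∀ hk : k < s+1, y ⟨k, hk⟩ = C ⟨k, hk⟩ := by
    intro k
    induction k using Nat.strong_induction_on with
    | _ k IH =>
        intro hk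
        have h1 := hkey (k:ℤ)
        rw [keyP _ k hk, keyP _ k hk] at h1
        have hpre : ((List.range k).map
            (fun j => (if h : j < s+1 then y ⟨j, h⟩ else 1) ^ zchoose (k:ℤ) j))
            = ((List.range k).map
            (fun j => (if h : j < s+1 then C ⟨j, h⟩ else 1) ^ zchoose (k:ℤ) j)) := by
          apply List.map_congr_left
          intro j hj
          simp only [List.mem_range] at hj
          have hjs : j < s+1 := by omega
          rw [dif_pos hjs, dif_pos hjs, IH j hj hjs]
        rw [hpre] at h1
        have h2 := mul_left_cancel h1
        rw [dif_pos hk, dif_pos hk] at h2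
        exact h2
  funext i
  have := huniq i.val i.isLt
  simpa using this
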